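/- Let H₀ be a symmetric n×n real matrix, let γ̄ > 0 and γ > 0, let Q be an n×s real matrix, and let M be a symmetric invertible s×s real matrix; set H := γ̄ H₀ + Q M⁻¹ Qᵀ. Let d, y ∈ ℝⁿ, define q := y − γ γ̄ H₀ d and δ := ⟨q, d⟩ − γ (Qᵀ d)ᵀ M⁻¹ (Qᵀ d), and assume δ ≠ 0. Then ⟨y − γ H d, d⟩ = δ ≠ 0, the (s+1)×(s+1) block matrix M₊ := [[γ⁻¹ M, Qᵀ d], [(Qᵀ d)ᵀ, ⟨q, d⟩]] is invertible, and the Kleinmichel update H⁺ := γ [ H + ((y − γ H d)(y − γ H d)ᵀ) / (γ ⟨y − γ H d, d⟩) ] satisfies the compact representation H⁺ = γ γ̄ H₀ + [Q q] M₊⁻¹ [Q q]ᵀ, where [Q q] is the n×(s+1) matrix obtained by appending the column q to Q. -/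

import Mathlib

open Matrix

theorem stmt14 {n s : ℕ}
    (H₀ : Matrix (Fin n) (Fin n) ℝ) (hH₀ : H₀.IsSymm)
    (γb γ : ℝ) (hγb : 0 < γb) (hγ : 0 < γ)
    (Q : Matrix (Fin n) (Fin s) ℝ)
    (M : Matrix (Fin s) (Fin s) ℝ) (hMsymm : M.IsSymm) (hM : IsUnit M)
    (H : Matrix (Fin n) (Fin n) ℝ) (hH : H = γb • H₀ + Q * M⁻¹ * Qᵀ)
    (d y : Fin n → ℝ)
    (q : Fin n → ℝ) (hq : q = y - (γ * γb) • (H₀ *ᵥ d))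
    (δ : ℝ) (hδ_def : δ = q ⬝ᵥ d - γ * ((Qᵀ *ᵥ d) ⬝ᵥ (M⁻¹ *ᵥ (Qᵀ *ᵥ d))))
    (hδ : δ ≠ 0)
    (Mplus : Matrix (Fin s ⊕ Unit) (Fin s ⊕ Unit) ℝ)
    (hMplus : Mplus = fromBlocks (γ⁻¹ • M) (replicateCol Unit (Qᵀ *ᵥ d)) (replicateRow Unit (Qᵀ *ᵥ d))
      (of fun _ _ => q ⬝ᵥ d))
    (Qplus : Matrix (Fin n) (Fin s ⊕ Unit) ℝ)
    (hQplus : Qplus = of fun i j => Sum.elim (Q i) (fun _ => q i) j)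
    (Hplus : Matrix (Fin n) (Fin n) ℝ)
    (hHplus : Hplus = γ • (H + (γ * ((y - γ • (H *ᵥ d)) ⬝ᵥ d))⁻¹ •
      vecMulVec (y - γ • (H *ᵥ d)) (y - γ • (H *ᵥ d)))) :
    (y - γ • (H *ᵥ d)) ⬝ᵥ d = δ ∧
    IsUnit Mplus ∧
    Hplus = (γ * γb) • H₀ + Qplus * Mplus⁻¹ * Qplusᵀ := by
  have hγ0 : γ ≠ 0 := ne_of_gt hγ
  set u : Fin s → ℝ := Qᵀ *ᵥ d with hu
  set v : Fin s → ℝ := M⁻¹ *ᵥ u with hv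
  set p : Fin n → ℝ := Q *ᵥ v with hp
  set w : Fin n → ℝ := y - γ • (H *ᵥ d) with hwdef
  have hdet : IsUnit M.det := (Matrix.isUnit_iff_isUnit_det M).mp hM
  have hMr : M * M⁻¹ = 1 := Matrix.mul_nonsing_inv M hdet
  have hMit : (M⁻¹)ᵀ = M⁻¹ := by
    rw [Matrix.transpose_nonsing_inv, hMsymm.eq]
  have hMv : M *ᵥ v = u := by
    rw [hv, Matrix.mulVec_mulVec, hMr, Matrix.one_mulVec]
  have huM : u ᵥ* M⁻¹ = v := by
    rw [← Matrix.mulVec_transpose, hMit, hv]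
  have hHd : H *ᵥ d = γb • (H₀ *ᵥ d) + p := by
    rw [hH, Matrix.add_mulVec, Matrix.smul_mulVec, hp, hv, hu,
      ← Matrix.mulVec_mulVec, ← Matrix.mulVec_mulVec]
  have hw : w = q - γ • p := by
    rw [hwdef, hHd, hq, smul_add, smul_smul]
    abel
  have hpd : p ⬝ᵥ d = u ⬝ᵥ v := by
    rw [dotProduct_comm, hp, Matrix.dotProduct_mulVec, ← Matrix.mulVec_transpose, ← hu]
  have part1 : w ⬝ᵥ d = δ := by
    rw [hw, hδ_def, sub_dotProduct, smul_dotProduct, hpd]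
    simp [smul_eq_mul]
  have hqd : q ⬝ᵥ d = δ + γ * (u ⬝ᵥ v) := by rw [hδ_def]; ring
  have hconst : ∀ c : ℝ, (of (fun _ _ => c) : Matrix Unit Unit ℝ) = c • (1 : Matrix Unit Unit ℝ) := by
    intro c; ext i j; simp [Matrix.one_apply]
  set N : Matrix (Fin s ⊕ Unit) (Fin s ⊕ Unit) ℝ :=
    fromBlocks (γ • M⁻¹ + (γ ^ 2 * δ⁻¹) • (replicateCol Unit v * replicateRow Unit v))
      ((-(γ * δ⁻¹)) • replicateCol Unit v) ((-(γ * δ⁻¹)) • replicateRow Unit v)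
      (of fun _ _ => δ⁻¹) with hN
  have hMN : Mplus * N = 1 := by
    rw [hMplus, hN, Matrix.fromBlocks_multiply, ← Matrix.fromBlocks_one]
    congr 1 <;>
      simp only [hconst, Matrix.mul_add, Matrix.add_mul, Matrix.smul_mul, Matrix.mul_smul,
        smul_smul, Matrix.mul_one, Matrix.one_mul, ← Matrix.mul_assoc, Matrix.replicateRow_mul_replicateCol]
    on_goal 1 => rw [hMr, ← Matrix.replicateCol_mulVec, hMv]
    on_goal 2 => rw [← Matrix.replicateCol_mulVec, hMv]
    on_goal 3 => rw [← Matrix.replicateRow_vecMul, huM]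
    all_goals match_scalars <;> (try simp only [hqd]) <;> field_simp <;> try ring
  have hUnit : IsUnit Mplus := by
    have := invertibleOfRightInverse _ _ hMN
    exact isUnit_of_invertible Mplus
  have hNinv : Mplus⁻¹ = N := Matrix.inv_eq_right_inv hMN
  refine ⟨part1, hUnit, ?_⟩
  have hQp : Qplus = fromCols Q (replicateCol Unit q) := by rw [hQplus]; rfl
  have hQpT : Qplusᵀ = fromRows Qᵀ (replicateRow Unit q) := by
    rw [hQp, Matrix.transpose_fromCols, Matrix.transpose_replicateCol]
  have hcolw : replicateCol Unit (q - γ • p) = replicateCol Unit q - γ • replicateCol Unit p := by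
    ext i j; simp [Matrix.replicateCol]
  have hroww : replicateRow Unit (q - γ • p) = replicateRow Unit q - γ • replicateRow Unit p := by
    ext i j; simp [Matrix.replicateRow]
  rw [hHplus, hNinv, hN, hQpT, hQp, Matrix.fromCols_mul_fromBlocks,
    Matrix.fromCols_mul_fromRows, part1, hH, hw, Matrix.vecMulVec_eq Unit, hcolw, hroww]
  simp only [hconst, Matrix.mul_add, Matrix.add_mul, Matrix.mul_sub, Matrix.sub_mul,
    Matrix.smul_mul, Matrix.mul_smul, smul_smul, smul_sub, smul_add, Matrix.mul_one,
    Matrix.one_mul, ← Matrix.mul_assoc]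
  have e4 : ∀ x : Fin n → ℝ, replicateCol Unit x * replicateRow Unit v * Qᵀ = replicateCol Unit x * replicateRow Unit p := by
    intro x
    rw [Matrix.mul_assoc, ← Matrix.replicateRow_vecMul, Matrix.vecMul_transpose, hp]
  have e2 : Q * replicateCol Unit v = replicateCol Unit p := by rw [← Matrix.replicateCol_mulVec, hp]
  simp only [e2, e4]
  match_scalars <;> field_simp <;> ring
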